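/- The formal power series f(t) = Σ_{n≥0} (−1)ⁿ · binom(2n,n)/(4ⁿ(2n+1)) · t^{2n+1} (the arcsinh series) is a compositional inverse of sinh(t) = Σ_{k≥0} t^{2k+1}/(2k+1)! in ℚ[[t]]: sinh(f(t)) = t and f(sinh(t)) = t. -/

import Mathlib

open PowerSeries

/-- Composition `f ∘ g` of formal power series (valid when `g` has zero
constant term): the `n`-th coefficient only involves `gᵏ` for `k ≤ n`. -/
noncomputable def psComp (f g : ℚ⟦X⟧) : ℚ⟦X⟧ :=
  PowerSeries.mk fun n =>
    PowerSeries.coeff n (∑ k ∈ Finset.range (n + 1), PowerSeries.C (PowerSeries.coeff k f) * g ^ k)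

/-- `sinh(u) = Σ_{k≥0} u^{2k+1}/(2k+1)!` as a formal power series. -/
noncomputable def psSinh : ℚ⟦X⟧ :=
  PowerSeries.mk fun m => if Odd m then 1 / (m.factorial : ℚ) else 0

/-- The arcsinh series `f(t) = Σ_{n≥0} (−1)ⁿ binom(2n,n)/(4ⁿ(2n+1)) t^{2n+1}`. -/
noncomputable def psArcsinh : ℚ⟦X⟧ :=
  PowerSeries.mk fun m =>
    if Odd m then
      ((-1 : ℚ) ^ ((m - 1) / 2)) * ((2 * ((m - 1) / 2)).choose ((m - 1) / 2) : ℚ) /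
        ((4 : ℚ) ^ ((m - 1) / 2) * (m : ℚ))
    else 0

namespace PSAux

open Finset

lemma coeff_pow_eq_zero {g : ℚ⟦X⟧} (hg : constantCoeff g = 0) {n k : ℕ} (h : n < k) :
    coeff n (g ^ k) = 0 :=
  X_pow_dvd_iff.mp (pow_dvd_pow_of_dvd (X_dvd_iff.mpr hg) k) n h

lemma coeff_psComp (f g : ℚ⟦X⟧) (n : ℕ) :
    coeff n (psComp f g) =
      coeff n (∑ k ∈ Finset.range (n + 1), C (coeff k f) * g ^ k) := by
  simp [psComp]

lemma coeff_psComp_stable {g : ℚ⟦X⟧} (hg : constantCoeff g = 0) (f : ℚ⟦X⟧) {n N : ℕ}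
    (hN : n < N) :
    coeff n (psComp f g) =
      coeff n (∑ k ∈ Finset.range N, C (coeff k f) * g ^ k) := by
  rw [coeff_psComp]
  rw [range_eq_Ico, range_eq_Ico, ← Finset.sum_Ico_consecutive _ (Nat.zero_le (n+1)) hN]
  rw [map_add, left_eq_add]
  rw [map_sum]
  refine Finset.sum_eq_zero fun k hk => ?_
  rw [Finset.mem_Ico] at hk
  rw [coeff_C_mul, coeff_pow_eq_zero hg hk.1, mul_zero]


variable {g : ℚ⟦X⟧} (hg : constantCoeff g = 0)

lemma psComp_C (a : ℚ) : psComp (C a) g = C a := by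
  ext n
  rw [coeff_psComp]
  rw [Finset.sum_eq_single 0]
  · simp
  · intro k _ hk
    rw [coeff_C, if_neg hk, map_zero, zero_mul]
  · simp

lemma psComp_one : psComp 1 g = 1 := by
  simpa using psComp_C (g := g) 1

lemma psComp_X (hg : constantCoeff g = 0) : psComp X g = g := by
  ext n
  rw [coeff_psComp_stable hg _ (Nat.lt_succ_of_lt n.lt_succ_self)]
  rw [Finset.sum_eq_single 1]
  · simp
  · intro k _ hk
    rw [coeff_X, if_neg hk, map_zero, zero_mul]
  · intro h
    exact absurd (Finset.mem_range.mpr (by omega)) h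

lemma psComp_add (f h : ℚ⟦X⟧) : psComp (f + h) g = psComp f g + psComp h g := by
  ext n
  rw [map_add, coeff_psComp, coeff_psComp, coeff_psComp, ← map_add, ← Finset.sum_add_distrib]
  congr 1
  refine Finset.sum_congr rfl fun k _ => ?_
  rw [map_add, map_add, add_mul]

lemma psComp_sub (f h : ℚ⟦X⟧) : psComp (f - h) g = psComp f g - psComp h g := by
  ext n
  rw [map_sub, coeff_psComp, coeff_psComp, coeff_psComp, ← map_sub, ← Finset.sum_sub_distrib]
  congr 1
  refine Finset.sum_congr rfl fun k _ => ?_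
  rw [map_sub, map_sub, sub_mul]

lemma coeff_mul_congr {A B h : ℚ⟦X⟧} {n : ℕ}
    (hAB : ∀ i ≤ n, coeff i A = coeff i B) :
    coeff n (A * h) = coeff n (B * h) := by
  rw [coeff_mul, coeff_mul]
  refine Finset.sum_congr rfl fun p hp => ?_
  rw [Finset.HasAntidiagonal.mem_antidiagonal] at hp
  rw [hAB p.1 (by omega)]

lemma psComp_mul (hg : constantCoeff g = 0) (f h : ℚ⟦X⟧) :
    psComp (f * h) g = psComp f g * psComp h g := by
  ext n
  have hsq : ∀ i j : ℕ, n < i + j → coeff n (C (coeff i f) * (C (coeff j h) * g ^ (i + j))) = 0 := by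
    intro i j hij
    rw [coeff_C_mul, coeff_C_mul, coeff_pow_eq_zero hg hij, mul_zero, mul_zero]
  -- RHS
  have hR : coeff n (psComp f g * psComp h g) =
      ∑ p ∈ Finset.range (n+1) ×ˢ Finset.range (n+1),
        coeff n (C (coeff p.1 f) * (C (coeff p.2 h) * g ^ (p.1 + p.2))) := by
    rw [coeff_mul_congr (fun i hi => coeff_psComp_stable hg f (Nat.lt_succ_of_le hi)),
        mul_comm, coeff_mul_congr (fun i hi => coeff_psComp_stable hg h (Nat.lt_succ_of_le hi)),
        mul_comm]
    rw [Finset.sum_mul_sum, ← Finset.sum_product', map_sum]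
    refine Finset.sum_congr rfl fun p _ => ?_
    congr 1
    rw [pow_add]; ring
  -- LHS
  have hL : coeff n (psComp (f * h) g) =
      ∑ k ∈ Finset.range (n+1), ∑ p ∈ Finset.HasAntidiagonal.antidiagonal k,
        coeff n (C (coeff p.1 f) * (C (coeff p.2 h) * g ^ (p.1 + p.2))) := by
    rw [coeff_psComp, map_sum]
    refine Finset.sum_congr rfl fun k hk => ?_
    rw [coeff_mul (R := ℚ) k f h, map_sum, Finset.sum_mul, map_sum]
    refine Finset.sum_congr rfl fun p hp => ?_
    rw [Finset.HasAntidiagonal.mem_antidiagonal] at hp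
    refine congrArg (coeff n) ?_
    rw [hp, map_mul, mul_assoc]
  rw [hL, hR]
  -- convert triangle sum to square sum
  have key : ∀ k ∈ Finset.range (n+1),
      (∑ p ∈ Finset.HasAntidiagonal.antidiagonal k,
        coeff n (C (coeff p.1 f) * (C (coeff p.2 h) * g ^ (p.1 + p.2)))) =
      ∑ p ∈ Finset.range (n+1) ×ˢ Finset.range (n+1),
        if p.1 + p.2 = k then
          coeff n (C (coeff p.1 f) * (C (coeff p.2 h) * g ^ (p.1 + p.2))) else 0 := by
    intro k hk
    rw [Finset.mem_range] at hk
    rw [← Finset.sum_filter]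
    refine Finset.sum_congr ?_ fun p _ => rfl
    ext p
    simp only [Finset.HasAntidiagonal.mem_antidiagonal, Finset.mem_filter, Finset.mem_product, Finset.mem_range]
    omega
  rw [Finset.sum_congr rfl key, Finset.sum_comm]
  refine Finset.sum_congr rfl fun p hp => ?_
  simp only [Finset.mem_product, Finset.mem_range] at hp
  rw [Finset.sum_ite_eq (Finset.range (n+1)) (p.1 + p.2)]
  split_ifs with hmem
  · rfl
  · rw [Finset.mem_range] at hmem
    exact (hsq p.1 p.2 (by omega)).symm

lemma constantCoeff_psComp (f : ℚ⟦X⟧) :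
    constantCoeff (psComp f g) = coeff 0 f := by
  rw [← coeff_zero_eq_constantCoeff_apply, coeff_psComp]
  simp

lemma coeff_one_psComp (f : ℚ⟦X⟧) :
    coeff 1 (psComp f g) = coeff 1 f * coeff 1 g := by
  rw [coeff_psComp]
  simp [Finset.sum_range_succ]

noncomputable def psCosh : ℚ⟦X⟧ :=
  PowerSeries.mk fun m => if Even m then 1 / (m.factorial : ℚ) else 0

/-- the series `(1+t²)^{-1/2}` -/
noncomputable def psS : ℚ⟦X⟧ :=
  PowerSeries.mk fun m =>
    if Even m then ((-1 : ℚ) ^ (m / 2)) * ((m / 2).centralBinom : ℚ) / (4 : ℚ) ^ (m / 2) else 0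

lemma deriv_sinh : d⁄dX ℚ psSinh = psCosh := by
  ext n
  rw [coeff_derivative]
  simp only [psSinh, psCosh, coeff_mk]
  rcases Nat.even_or_odd n with he | ho
  · rw [if_pos (by rw [Nat.odd_iff]; rw [Nat.even_iff] at he; omega), if_pos he, Nat.factorial_succ]
    have h1 : (n.factorial : ℚ) ≠ 0 := Nat.cast_ne_zero.mpr n.factorial_ne_zero
    have h2 : ((n : ℚ) + 1) ≠ 0 := by positivity
    field_simp
    push_cast; ring
  · rw [if_neg (by rw [Nat.not_odd_iff_even, Nat.even_iff]; rw [Nat.odd_iff] at ho; omega), if_neg (by rw [Nat.not_even_iff]; rw [Nat.odd_iff] at ho; omega)]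
    simp

lemma deriv_cosh : d⁄dX ℚ psCosh = psSinh := by
  ext n
  rw [coeff_derivative]
  simp only [psSinh, psCosh, coeff_mk]
  rcases Nat.even_or_odd n with he | ho
  · rw [if_neg (by rw [Nat.not_even_iff]; rw [Nat.even_iff] at he; omega), if_neg (by rw [Nat.not_odd_iff_even]; exact he)]
    simp
  · rw [if_pos (by rw [Nat.even_iff]; rw [Nat.odd_iff] at ho; omega), if_pos ho,
      Nat.factorial_succ]
    have h1 : (n.factorial : ℚ) ≠ 0 := Nat.cast_ne_zero.mpr n.factorial_ne_zero
    have h2 : ((n : ℚ) + 1) ≠ 0 := by positivity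
    field_simp
    push_cast; ring

lemma deriv_arcsinh : d⁄dX ℚ psArcsinh = psS := by
  ext n
  rw [coeff_derivative]
  simp only [psArcsinh, psS, coeff_mk]
  rcases Nat.even_or_odd n with he | ho
  · rw [if_pos he.add_one, if_pos he]
    have hh : (n + 1 - 1) / 2 = n / 2 := by omega
    rw [hh, Nat.centralBinom]
    have h2 : ((n : ℚ) + 1) ≠ 0 := by positivity
    have h4 : (4 : ℚ) ^ (n / 2) ≠ 0 := by positivity
    push_cast
    field_simp
  · rw [if_neg (by rw [Nat.not_odd_iff_even, Nat.even_iff]; rw [Nat.odd_iff] at ho; omega),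
      if_neg (by rw [Nat.not_even_iff]; rw [Nat.odd_iff] at ho; omega)]
    simp

lemma constCoeff_sinh : constantCoeff psSinh = 0 := by
  simp [psSinh, ← coeff_zero_eq_constantCoeff_apply]
lemma constCoeff_arcsinh : constantCoeff psArcsinh = 0 := by
  simp [psArcsinh, ← coeff_zero_eq_constantCoeff_apply]
lemma constCoeff_cosh : constantCoeff psCosh = 1 := by
  simp [psCosh, ← coeff_zero_eq_constantCoeff_apply]
lemma constCoeff_psS : constantCoeff psS = 1 := by
  simp [psS, ← coeff_zero_eq_constantCoeff_apply, Nat.centralBinom]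

lemma psS_rel : (1 + X ^ 2) * d⁄dX ℚ psS = -(X * psS) := by
  ext n
  rw [add_mul, one_mul, map_add, map_neg]
  have hx2 : ∀ j < 2, coeff j (X ^ 2 * d⁄dX ℚ psS) = 0 :=
    fun j hj => X_pow_dvd_iff.mp ⟨_, rfl⟩ j hj
  match n with
  | 0 =>
    rw [hx2 0 (by norm_num), coeff_derivative]
    have : coeff 0 (X * psS) = 0 := by
      rw [coeff_zero_eq_constantCoeff_apply, map_mul, constantCoeff_X, zero_mul]
    rw [this]
    simp [psS]
  | 1 =>
    rw [hx2 1 (by norm_num), coeff_derivative, coeff_succ_X_mul]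
    simp only [psS, coeff_mk]
    norm_num [Nat.centralBinom]
  | (m+2) =>
    rw [coeff_X_pow_mul (d⁄dX ℚ psS) 2 m, coeff_succ_X_mul, coeff_derivative, coeff_derivative]
    rcases Nat.even_or_odd m with ⟨k, rfl⟩ | ⟨k, rfl⟩
    · simp only [psS, coeff_mk]
      have h1 : ¬ Even (k+k+2+1) := by rw [Nat.not_even_iff]; omega
      have h2 : ¬ Even (k+k+1) := by rw [Nat.not_even_iff]; omega
      rw [if_neg h1, if_neg h2]
      simp
    · simp only [psS, coeff_mk]
      have p1 : Even (2*k+1+2+1) := ⟨k+2, by ring⟩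
      have p2 : Even (2*k+1+1) := ⟨k+1, by ring⟩
      rw [if_pos p1, if_pos p2]
      have e1 : (2*k+1+2+1)/2 = k + 2 := by omega
      have e2 : (2*k+1+1)/2 = k + 1 := by omega
      rw [e1, e2]
      have hc := Nat.succ_mul_centralBinom_succ (k+1)
      have hcq : ((k:ℚ)+1+1) * ((k+2).centralBinom : ℚ)
          = 2*(2*((k:ℚ)+1)+1) * ((k+1).centralBinom : ℚ) := by exact_mod_cast hc
      push_cast
      linear_combination ((2:ℚ)*(-1)^k/4^(k+2)) * hcq

lemma cosh_sq_sub_sinh_sq : psCosh ^ 2 - psSinh ^ 2 = 1 := by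
  have hD : d⁄dX ℚ (psCosh ^ 2 - psSinh ^ 2) = d⁄dX ℚ 1 := by
    rw [map_sub, Derivation.leibniz_pow, Derivation.leibniz_pow, deriv_cosh, deriv_sinh,
      Derivation.map_one_eq_zero]
    simp only [pow_one, smul_eq_mul, nsmul_eq_mul]
    ring
  refine derivative.ext hD ?_
  rw [map_sub, map_one, map_pow, map_pow, constCoeff_cosh, constCoeff_sinh]
  norm_num

lemma one_add_sq_mul_psS_sq : (1 + X ^ 2) * psS ^ 2 = 1 := by
  have hD : d⁄dX ℚ ((1 + X ^ 2) * psS ^ 2) = d⁄dX ℚ 1 := by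
    rw [Derivation.leibniz, Derivation.leibniz_pow, map_add, Derivation.leibniz_pow, derivative_X,
      Derivation.map_one_eq_zero]
    simp only [pow_one, smul_eq_mul, nsmul_eq_mul, mul_one]
    norm_num
    linear_combination (2 * psS) * psS_rel
  refine derivative.ext hD ?_
  rw [map_mul, map_add, map_one, map_pow, map_pow, constantCoeff_X, constCoeff_psS]
  norm_num

lemma derivative_psComp {g : ℚ⟦X⟧} (hg : constantCoeff g = 0) (f : ℚ⟦X⟧) :
    d⁄dX ℚ (psComp f g) = psComp (d⁄dX ℚ f) g * d⁄dX ℚ g := by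
  ext n
  rw [coeff_derivative, coeff_psComp_stable hg f (show n + 1 < n + 2 by omega),
    ← coeff_derivative]
  have h2 : d⁄dX ℚ (∑ k ∈ Finset.range (n+2), C (coeff k f) * g ^ k)
      = (∑ j ∈ Finset.range (n+1), C (coeff j (d⁄dX ℚ f)) * g ^ j) * d⁄dX ℚ g := by
    rw [map_sum, Finset.sum_range_succ']
    simp only [Derivation.leibniz, Derivation.leibniz_pow, derivative_C, smul_eq_mul,
      nsmul_eq_mul, smul_zero, mul_zero, add_zero, zero_add, pow_zero, Nat.cast_zero,
      zero_mul, Nat.cast_add, Nat.cast_one, Nat.add_sub_cancel, coeff_derivative]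
    rw [Finset.sum_mul]
    simp only [Derivation.map_one_eq_zero, mul_zero, add_zero]
    refine Finset.sum_congr rfl fun j _ => ?_
    rw [map_mul, map_add, map_one, map_natCast]
    ring
  rw [h2]
  exact coeff_mul_congr fun i hi => (coeff_psComp_stable hg _ (Nat.lt_succ_of_le hi)).symm


lemma psComp_zero : psComp 0 g = 0 := by
  simpa using psComp_C (g := g) 0

lemma psComp_neg (f : ℚ⟦X⟧) : psComp (-f) g = -psComp f g := by
  have := psComp_sub (g := g) 0 f
  simpa [psComp_zero] using this

lemma ode_unique {p : ℚ⟦X⟧}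
    (hode : (1 + X ^ 2) * d⁄dX ℚ (d⁄dX ℚ p) + X * d⁄dX ℚ p - p = 0)
    (h0 : coeff 0 p = 0) (h1 : coeff 1 p = 0) : p = 0 := by
  suffices H : ∀ n, coeff n p = 0 by
    ext n; rw [H n, map_zero]
  intro n
  induction n using Nat.strong_induction_on with
  | _ n ih =>
    match n with
    | 0 => exact h0
    | 1 => exact h1
    | (m+2) =>
      have heq := congrArg (coeff m) hode
      rw [map_zero, map_sub, map_add, add_mul, one_mul, map_add] at heq
      have e1 : coeff m (d⁄dX ℚ (d⁄dX ℚ p)) = coeff (m+2) p * (m+2) * (m+1) := by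
        rw [coeff_derivative, coeff_derivative]
        push_cast
        ring
      have e2 : coeff m (X ^ 2 * d⁄dX ℚ (d⁄dX ℚ p)) = 0 := by
        match m with
        | 0 => exact X_pow_dvd_iff.mp ⟨_, rfl⟩ 0 (by norm_num)
        | 1 => exact X_pow_dvd_iff.mp ⟨_, rfl⟩ 1 (by norm_num)
        | (l+2) =>
          rw [coeff_X_pow_mul _ 2 l, coeff_derivative, coeff_derivative,
            ih (l+2) (by omega)]
          ring
      have e3 : coeff m (X * d⁄dX ℚ p) = 0 := by
        match m with
        | 0 =>
          rw [coeff_zero_eq_constantCoeff_apply, map_mul, constantCoeff_X, zero_mul]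
        | (l+1) =>
          rw [coeff_succ_X_mul, coeff_derivative, ih (l+1) (by omega), zero_mul]
      rw [e1, e2, e3, ih m (by omega)] at heq
      have hm2 : ((m:ℚ)+2) * ((m:ℚ)+1) ≠ 0 := by positivity
      have : coeff (m+2) p * (((m:ℚ)+2) * ((m:ℚ)+1)) = 0 := by
        push_cast at heq
        linarith [heq]
      exact (mul_eq_zero.mp this).resolve_right hm2

lemma dir2 : psComp psSinh psArcsinh = X := by
  set F := psComp psSinh psArcsinh with hFdef
  set G := psComp psCosh psArcsinh with hGdef
  have hF' : d⁄dX ℚ F = G * psS := by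
    rw [hFdef, derivative_psComp constCoeff_arcsinh, deriv_sinh, deriv_arcsinh]
  have hG' : d⁄dX ℚ G = F * psS := by
    rw [hGdef, derivative_psComp constCoeff_arcsinh, deriv_cosh, deriv_arcsinh]
  have hGF : G ^ 2 - F ^ 2 = 1 := by
    rw [hFdef, hGdef, sq, sq, ← psComp_mul constCoeff_arcsinh, ← psComp_mul constCoeff_arcsinh,
      ← psComp_sub, ← sq, ← sq, cosh_sq_sub_sinh_sq, psComp_one]
  have hF'' : d⁄dX ℚ (d⁄dX ℚ F) = F * psS ^ 2 + G * d⁄dX ℚ psS := by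
    rw [hF', Derivation.leibniz, hG']
    simp only [smul_eq_mul]
    ring
  have hODE : (1 + X ^ 2) * d⁄dX ℚ (d⁄dX ℚ F) + X * d⁄dX ℚ F - F = 0 := by
    rw [hF'', hF']
    linear_combination F * one_add_sq_mul_psS_sq + G * psS_rel
  have hq : (1 + X ^ 2) * d⁄dX ℚ (d⁄dX ℚ (F - X)) + X * d⁄dX ℚ (F - X) - (F - X) = 0 := by
    rw [map_sub, derivative_X, map_sub, Derivation.map_one_eq_zero]
    linear_combination hODE
  have h0 : coeff 0 (F - X) = 0 := by
    rw [map_sub, coeff_zero_eq_constantCoeff_apply, constantCoeff_psComp]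
    simp [psSinh]
  have h1 : coeff 1 (F - X) = 0 := by
    rw [map_sub, coeff_one_psComp]
    simp [psSinh, psArcsinh]
  exact sub_eq_zero.mp (ode_unique hq h0 h1)


lemma dir1 : psComp psArcsinh psSinh = X := by
  set u := psComp psS psSinh with hudef
  have hu' : d⁄dX ℚ u = psComp (d⁄dX ℚ psS) psSinh * psCosh := by
    rw [hudef, derivative_psComp constCoeff_sinh, deriv_sinh]
  have hkey : psCosh ^ 2 * psComp (d⁄dX ℚ psS) psSinh = -(psSinh * u) := by
    have h := congrArg (fun p => psComp p psSinh) psS_rel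
    rw [psComp_mul constCoeff_sinh, psComp_add, psComp_one, psComp_neg,
      psComp_mul constCoeff_sinh, psComp_X constCoeff_sinh, ← hudef,
      show (X : ℚ⟦X⟧) ^ 2 = X * X from sq X, psComp_mul constCoeff_sinh,
      psComp_X constCoeff_sinh] at h
    rw [← h]
    linear_combination (psComp (d⁄dX ℚ psS) psSinh) * cosh_sq_sub_sinh_sq
  have hcoshu : psCosh * u = 1 := by
    refine derivative.ext ?_ ?_
    · rw [Derivation.leibniz, deriv_cosh, hu', Derivation.map_one_eq_zero]
      simp only [smul_eq_mul]
      linear_combination hkey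
    · rw [map_mul, constCoeff_cosh, map_one, hudef, constantCoeff_psComp]
      simp [psS, Nat.centralBinom]
  have hD : d⁄dX ℚ (psComp psArcsinh psSinh) = d⁄dX ℚ X := by
    rw [derivative_psComp constCoeff_sinh, deriv_arcsinh, deriv_sinh, derivative_X, ← hudef,
      mul_comm u psCosh, hcoshu]
  refine derivative.ext hD ?_
  rw [constantCoeff_psComp]
  simp [psArcsinh, constantCoeff_X]

end PSAux

/-- The arcsinh series is a compositional inverse of the sinh series in `ℚ⟦X⟧`:
`sinh(f(t)) = t` and `f(sinh(t)) = t`. -/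
theorem stmt2 :
    psComp psSinh psArcsinh = PowerSeries.X ∧ psComp psArcsinh psSinh = PowerSeries.X := by
  exact ⟨PSAux.dir2, PSAux.dir1⟩
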